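/- For q ∈ [0,1), the function m ↦ 1 − (2(1−q)^{1/m} − 1)^m (defined for positive integers m with 2(1−q)^{1/m} − 1 ≥ 0) is non-increasing in m, attains its maximum value 2q at m = 1, and converges to 2q − q² as m → ∞. -/

import Mathlib

open Filter

section aux

open Real

private lemma key_ineq18 (p : ℝ) (hp : 1 ≤ p) {x : ℝ} (hx2 : 1/2 ≤ x) (hx1 : x ≤ 1) :
    2 * x ^ p - 1 ≤ (2 * x - 1) ^ p := by
  set h : ℝ → ℝ := fun y => (2 * y - 1) ^ p - 2 * y ^ p with hh
  have hd : ∀ y : ℝ, HasDerivAt h (2 * p * (2 * y - 1) ^ (p - 1) - 2 * (1 * p * y ^ (p - 1))) y := by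
    intro y
    have h1 : HasDerivAt (fun y : ℝ => 2 * y - 1) 2 y := by
      simpa using ((hasDerivAt_id y).const_mul 2).sub_const 1
    have h2 := h1.rpow_const (p := p) (Or.inr hp)
    have h3 := ((hasDerivAt_id y).rpow_const (p := p) (Or.inr hp)).const_mul 2
    exact h2.sub h3
  have hanti : AntitoneOn h (Set.Icc (1/2 : ℝ) 1) := by
    apply antitoneOn_of_deriv_nonpos (convex_Icc _ _)
    · exact fun y _ => ((hd y).differentiableAt).continuousAt.continuousWithinAt
    · exact fun y _ => ((hd y).differentiableAt).differentiableWithinAt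
    · intro y hy
      rw [interior_Icc] at hy
      rw [(hd y).deriv]
      have hy1 : 0 ≤ 2 * y - 1 := by have := hy.1; norm_num at this ⊢; linarith
      have hle : (2 * y - 1) ^ (p - 1) ≤ y ^ (p - 1) := by
        apply Real.rpow_le_rpow hy1 (by linarith [hy.2]) (by linarith)
      nlinarith [hle, hp]
  have := hanti (Set.mem_Icc.2 ⟨hx2, hx1⟩) (Set.mem_Icc.2 ⟨by norm_num, le_refl 1⟩) hx1
  simp only [hh] at this
  norm_num at this
  linarith

private lemma step_ineq18 {c : ℝ} (hc0 : 0 < c) (hc1 : c ≤ 1) {m : ℕ} (hm : 1 ≤ m)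
    (hb : 0 ≤ 2 * c ^ ((m : ℝ)⁻¹) - 1) :
    (2 * c ^ ((m : ℝ)⁻¹) - 1) ^ m ≤ (2 * c ^ (((m + 1 : ℕ) : ℝ)⁻¹) - 1) ^ (m + 1) := by
  have hm0 : (0 : ℝ) < m := by exact_mod_cast hm
  set x : ℝ := c ^ (((m : ℝ) + 1)⁻¹) with hx
  set p : ℝ := ((m : ℝ) + 1) / m with hp
  have hp1 : 1 ≤ p := by
    rw [hp, le_div_iff₀ hm0]; linarith
  have hxp : x ^ p = c ^ ((m : ℝ)⁻¹) := by
    rw [hx, ← Real.rpow_mul hc0.le]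
    rw [hp]
    field_simp
  have hx0 : 0 < x := Real.rpow_pos_of_pos hc0 _
  have hx1 : x ≤ 1 := Real.rpow_le_one hc0.le hc1 (by positivity)
  have hxpx : x ^ p ≤ x := by
    nth_rewrite 2 [← Real.rpow_one x]
    exact Real.rpow_le_rpow_of_exponent_ge hx0 hx1 hp1
  have hx2 : 1/2 ≤ x := by
    rw [hxp] at hxpx; linarith
  have hk := key_ineq18 p hp1 hx2 hx1
  rw [hxp] at hk
  have h1 : (2 * c ^ ((m : ℝ)⁻¹) - 1) ^ m ≤ ((2 * x - 1) ^ p) ^ m :=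
    pow_le_pow_left₀ hb hk m
  refine h1.trans_eq ?_
  have h2x : 0 ≤ 2 * x - 1 := by linarith
  rw [← Real.rpow_natCast ((2*x-1)^p) m, ← Real.rpow_mul h2x]
  have hpm : p * (m : ℝ) = ((m + 1 : ℕ) : ℝ) := by
    rw [hp]; push_cast; field_simp
  rw [hpm, Real.rpow_natCast]
  congr 2
  rw [hx]
  congr 1
  push_cast; ring

private lemma mono_ineq18 {c : ℝ} (hc0 : 0 < c) (hc1 : c ≤ 1) :
    ∀ m n : ℕ, 1 ≤ m → m ≤ n → 0 ≤ 2 * c ^ ((m : ℝ)⁻¹) - 1 →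
      (2 * c ^ ((m : ℝ)⁻¹) - 1) ^ m ≤ (2 * c ^ ((n : ℝ)⁻¹) - 1) ^ n := by
  intro m n hm hmn hb
  induction n, hmn using Nat.le_induction with
  | base => exact le_rfl
  | succ n hmn ih =>
    have hn1 : 1 ≤ n := le_trans hm hmn
    have hbn : 0 ≤ 2 * c ^ ((n : ℝ)⁻¹) - 1 := by
      have hle : c ^ ((m : ℝ)⁻¹) ≤ c ^ ((n : ℝ)⁻¹) := by
        apply Real.rpow_le_rpow_of_exponent_ge hc0 hc1
        apply inv_anti₀ (by exact_mod_cast hm) (by exact_mod_cast hmn)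
      linarith
    exact le_trans ih (step_ineq18 hc0 hc1 hn1 hbn)

private lemma slope_exp18 :
    Tendsto (fun u : ℝ => (Real.exp u - 1) / u) (nhdsWithin 0 {0}ᶜ) (nhds 1) := by
  have h := (Real.hasDerivAt_exp 0)
  rw [hasDerivAt_iff_tendsto_slope] at h
  simp only [Real.exp_zero] at h
  convert h using 2 with u
  rw [slope_def_field]
  simp [div_eq_div_iff]

private lemma slope_log18 :
    Tendsto (fun y : ℝ => Real.log y / (y - 1)) (nhdsWithin 1 {1}ᶜ) (nhds 1) := by
  have h := Real.hasDerivAt_log (one_ne_zero)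
  rw [hasDerivAt_iff_tendsto_slope] at h
  norm_num at h
  convert h using 2 with y
  rw [slope_def_field]
  simp

private lemma limA18 {c : ℝ} (hc0 : 0 < c) (hclt : c < 1) :
    Tendsto (fun m : ℕ => (m : ℝ) * (c ^ ((m : ℝ)⁻¹) - 1)) atTop (nhds (Real.log c)) := by
  set L := Real.log c with hL
  have hLne : L ≠ 0 := by
    rw [hL]
    exact ne_of_lt (Real.log_neg hc0 hclt)
  have hinv : Tendsto (fun m : ℕ => (m : ℝ)⁻¹) atTop (nhds 0) :=
    tendsto_inv_atTop_zero.comp tendsto_natCast_atTop_atTop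
  have hu : Tendsto (fun m : ℕ => L * (m : ℝ)⁻¹) atTop (nhdsWithin 0 {0}ᶜ) := by
    apply tendsto_nhdsWithin_of_tendsto_nhds_of_eventually_within
    · simpa using hinv.const_mul L
    · filter_upwards [eventually_ge_atTop 1] with m hm
      have : ((m : ℝ))⁻¹ ≠ 0 := by
        have : (0:ℝ) < m := by exact_mod_cast hm
        positivity
      simp [Set.mem_compl_iff, hLne, this]
  have hcomp := (slope_exp18.comp hu).mul_const L
  rw [one_mul] at hcomp
  apply hcomp.congr'
  filter_upwards [eventually_ge_atTop 1] with m hm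
  have hm0 : (0:ℝ) < m := by exact_mod_cast hm
  have hrw : c ^ ((m : ℝ)⁻¹) = Real.exp (L * (m : ℝ)⁻¹) := by
    rw [Real.rpow_def_of_pos hc0]
  rw [hrw]
  simp only [Function.comp]
  field_simp

private lemma limC18 {c : ℝ} (hc0 : 0 < c) (hclt : c < 1) :
    Tendsto (fun m : ℕ => (m : ℝ) * Real.log (2 * c ^ ((m : ℝ)⁻¹) - 1)) atTop
      (nhds (2 * Real.log c)) := by
  set t : ℕ → ℝ := fun m => 2 * c ^ ((m : ℝ)⁻¹) - 1 with ht
  have hinv : Tendsto (fun m : ℕ => (m : ℝ)⁻¹) atTop (nhds 0) :=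
    tendsto_inv_atTop_zero.comp tendsto_natCast_atTop_atTop
  have hcr : Tendsto (fun m : ℕ => c ^ ((m : ℝ)⁻¹)) atTop (nhds 1) := by
    have hcont : ContinuousAt (fun y : ℝ => c ^ y) 0 :=
      Real.continuousAt_const_rpow hc0.ne'
    have := hcont.tendsto.comp hinv
    simpa [Function.comp_def] using this
  have htone : Tendsto t atTop (nhds 1) := by
    have := (hcr.const_mul 2).sub_const 1
    norm_num at this
    exact this
  have htlt : ∀ m : ℕ, 1 ≤ m → t m < 1 := by
    intro m hm
    have hm0 : (0:ℝ) < m := by exact_mod_cast hm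
    have : c ^ ((m : ℝ)⁻¹) < 1 :=
      Real.rpow_lt_one hc0.le hclt (by positivity)
    simp only [ht]; linarith
  have htw : Tendsto t atTop (nhdsWithin 1 {1}ᶜ) := by
    apply tendsto_nhdsWithin_of_tendsto_nhds_of_eventually_within _ htone
    filter_upwards [eventually_ge_atTop 1] with m hm
    exact ne_of_lt (htlt m hm)
  have hslope : Tendsto (fun m : ℕ => Real.log (t m) / (t m - 1)) atTop (nhds 1) :=
    slope_log18.comp htw
  have hA : Tendsto (fun m : ℕ => (m : ℝ) * (t m - 1)) atTop (nhds (2 * Real.log c)) := by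
    have := (limA18 hc0 hclt).const_mul 2
    apply this.congr
    intro m
    simp only [ht]; ring
  have hmul := hA.mul hslope
  rw [mul_one] at hmul
  apply hmul.congr'
  filter_upwards [eventually_ge_atTop 1] with m hm
  have hne : t m - 1 ≠ 0 := sub_ne_zero.2 (ne_of_lt (htlt m hm))
  field_simp
  simp only [ht]; ring_nf

end aux

/-- For `q ∈ [0,1)`, the function
`m ↦ 1 − (2(1−q)^{1/m} − 1)^m` (for positive integers `m` where the base is
nonnegative) is non-increasing in `m`, equals its maximum value `2q` at `m = 1`,
and converges to `2q − q²` as `m → ∞`. -/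
theorem min_bound_monotone_limit
    (q : ℝ) (hq : q ∈ Set.Ico (0 : ℝ) 1)
    (f : ℕ → ℝ)
    (hf : f = fun m : ℕ => 1 - (2 * (1 - q) ^ ((m : ℝ)⁻¹) - 1) ^ m) :
    (∀ m n : ℕ, 1 ≤ m → m ≤ n →
        0 ≤ 2 * (1 - q) ^ ((m : ℝ)⁻¹) - 1 → f n ≤ f m)
      ∧ f 1 = 2 * q
      ∧ Tendsto f atTop (nhds (2 * q - q ^ 2)) := by
  obtain ⟨hq0, hq1⟩ := hq
  have hc0 : (0 : ℝ) < 1 - q := by linarith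
  have hc1 : (1 : ℝ) - q ≤ 1 := by linarith
  refine ⟨?_, ?_, ?_⟩
  · intro m n hm hmn hb
    rw [hf]
    simp only
    have := mono_ineq18 hc0 hc1 m n hm hmn hb
    linarith
  · rw [hf]
    norm_num
    ring
  · rcases eq_or_lt_of_le hq0 with hq0' | hq0'
    · -- q = 0
      have hq' : q = 0 := hq0'.symm
      subst hq'
      have : f = fun _ : ℕ => 0 := by
        rw [hf]; funext m; norm_num
      rw [this]
      norm_num
    · -- 0 < q
      have hclt : (1 : ℝ) - q < 1 := by linarith
      have hC := limC18 hc0 hclt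
      have hexp := (Real.continuous_exp.tendsto _).comp hC
      have hval : Real.exp (2 * Real.log (1 - q)) = (1 - q) ^ 2 := by
        rw [mul_comm, Real.exp_mul, Real.exp_log hc0]
        norm_num [Real.rpow_natCast]
      rw [hval] at hexp
      have ht1 : Tendsto (fun m : ℕ => 1 - (2 * (1 - q) ^ ((m : ℝ)⁻¹) - 1) ^ m) atTop
          (nhds (1 - (1 - q) ^ 2)) := by
        have hpos : ∀ᶠ m : ℕ in atTop, (0 : ℝ) < 2 * (1 - q) ^ ((m : ℝ)⁻¹) - 1 := by
          have hinv : Tendsto (fun m : ℕ => (m : ℝ)⁻¹) atTop (nhds 0) :=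
            tendsto_inv_atTop_zero.comp tendsto_natCast_atTop_atTop
          have hcr : Tendsto (fun m : ℕ => (1 - q) ^ ((m : ℝ)⁻¹)) atTop (nhds 1) := by
            have hcont : ContinuousAt (fun y : ℝ => (1 - q) ^ y) 0 :=
              Real.continuousAt_const_rpow hc0.ne'
            have := hcont.tendsto.comp hinv
            simpa [Function.comp_def] using this
          have htone : Tendsto (fun m : ℕ => 2 * (1 - q) ^ ((m : ℝ)⁻¹) - 1) atTop (nhds 1) := by
            have := (hcr.const_mul 2).sub_const 1
            norm_num at this
            exact this
          exact htone.eventually (eventually_gt_nhds (by norm_num))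
        have heq : (fun m : ℕ => 1 - Real.exp ((m : ℝ) * Real.log (2 * (1 - q) ^ ((m : ℝ)⁻¹) - 1)))
            =ᶠ[atTop] fun m : ℕ => 1 - (2 * (1 - q) ^ ((m : ℝ)⁻¹) - 1) ^ m := by
          filter_upwards [hpos] with m hm
          congr 1
          rw [← Real.rpow_natCast (2 * (1 - q) ^ ((m : ℝ)⁻¹) - 1) m,
            Real.rpow_def_of_pos hm, mul_comm]
        have := (tendsto_const_nhds (x := (1:ℝ)) (f := atTop)).sub hexp
        exact Tendsto.congr' heq (by simpa using this)
      rw [hf]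
      have : 1 - (1 - q) ^ 2 = 2 * q - q ^ 2 := by ring
      rwa [this] at ht1
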